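/- arXiv:1903.08676 — 3 statements merged into one kernel-verified Lean document; each statement's English description precedes it below -/
import Mathlib

section
/- Let a, b ∈ ℝ with b ≤ 0, and suppose either a ≤ 0 or a + b ≥ 1 (equivalently a ≥ 1 - b ≥ 1). Then (r,t) ↦ r^a t^b is convex on (0,∞)². -/
open Real

private lemma rpow_tangent (a b : ℝ) (hb : b ≤ 0) (hab : a ≤ 0 ∨ 1 ≤ a + b)
    {u v : ℝ} (hu : 0 < u) (hv : 0 < v) :
    a * u + b * v + (1 - a - b) ≤ u ^ a * v ^ b := by
  have hG : (0:ℝ) < u ^ a * v ^ b := mul_pos (rpow_pos_of_pos hu a) (rpow_pos_of_pos hv b)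
  rcases hab with ha | hab
  · -- case a ≤ 0, b ≤ 0
    set c : ℝ := 1 - a - b with hc
    have hc0 : (0:ℝ) < c := by simp only [hc]; linarith
    have h := Real.geom_mean_le_arith_mean3_weighted
      (by positivity : (0:ℝ) ≤ 1/c)
      (show (0:ℝ) ≤ -a/c from div_nonneg (by linarith) hc0.le)
      (show (0:ℝ) ≤ -b/c from div_nonneg (by linarith) hc0.le)
      hG.le hu.le hv.le
      (by rw [show 1/c + -a/c + -b/c = (1 - a - b)/c by ring, ← hc, div_self hc0.ne'])
    have hgm : (u ^ a * v ^ b) ^ (1/c) * u ^ (-a/c) * v ^ (-b/c) = 1 := by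
      calc (u ^ a * v ^ b) ^ (1/c) * u ^ (-a/c) * v ^ (-b/c)
          = (u ^ (a*(1/c)) * u ^ (-a/c)) * (v ^ (b*(1/c)) * v ^ (-b/c)) := by
            rw [Real.mul_rpow (rpow_pos_of_pos hu a).le (rpow_pos_of_pos hv b).le,
              ← Real.rpow_mul hu.le, ← Real.rpow_mul hv.le]; ring
        _ = u ^ (a*(1/c) + -a/c) * v ^ (b*(1/c) + -b/c) := by
            rw [← Real.rpow_add hu, ← Real.rpow_add hv]
        _ = 1 := by
            rw [show a*(1/c) + -a/c = 0 by ring, show b*(1/c) + -b/c = 0 by ring,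
              Real.rpow_zero, Real.rpow_zero, mul_one]
    rw [hgm] at h
    have h' : (1:ℝ) ≤ (u ^ a * v ^ b - a * u - b * v) / c := by
      rw [show (u ^ a * v ^ b - a * u - b * v) / c
          = 1/c * (u ^ a * v ^ b) + -a/c * u + -b/c * v by ring]
      exact h
    have := (one_le_div hc0).mp h'
    linarith
  · -- case 1 ≤ a + b
    have ha : (1:ℝ) ≤ a := by linarith
    set q : ℝ := 1 - b with hqdef
    have hq : (0:ℝ) < q := by simp only [hqdef]; linarith
    set p : ℝ := a / q with hpdef
    have hp : (1:ℝ) ≤ p := (one_le_div hq).mpr (by linarith)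
    have hber : 1 + p * (u - 1) ≤ (1 + (u - 1)) ^ p :=
      one_add_mul_self_le_rpow_one_add (by linarith) hp
    rw [show (1:ℝ) + (u - 1) = u by ring] at hber
    have h := Real.geom_mean_le_arith_mean2_weighted
      (by positivity : (0:ℝ) ≤ 1/q)
      (show (0:ℝ) ≤ -b/q from div_nonneg (by linarith) hq.le)
      hG.le hv.le
      (by rw [show 1/q + -b/q = (1 - b)/q by ring, ← hqdef, div_self hq.ne'])
    have hgm : (u ^ a * v ^ b) ^ (1/q) * v ^ (-b/q) = u ^ p := by
      calc (u ^ a * v ^ b) ^ (1/q) * v ^ (-b/q)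
          = u ^ (a*(1/q)) * (v ^ (b*(1/q)) * v ^ (-b/q)) := by
            rw [Real.mul_rpow (rpow_pos_of_pos hu a).le (rpow_pos_of_pos hv b).le,
              ← Real.rpow_mul hu.le, ← Real.rpow_mul hv.le]; ring
        _ = u ^ (a*(1/q)) * v ^ (b*(1/q) + -b/q) := by rw [← Real.rpow_add hv]
        _ = u ^ p := by
            rw [show b*(1/q) + -b/q = 0 by ring, Real.rpow_zero, mul_one, hpdef]
            ring_nf
    rw [hgm] at h
    have h' : u ^ p ≤ (u ^ a * v ^ b + -b * v) / q := by
      rw [show (u ^ a * v ^ b + -b * v) / q = 1/q * (u ^ a * v ^ b) + -b/q * v by ring]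
      exact h
    have h2 : u ^ p * q ≤ u ^ a * v ^ b + -b * v := (le_div_iff₀ hq).mp h'
    have hqp : q * p = a := by rw [hpdef]; field_simp [hq.ne']
    have h3 : q * (1 + p * (u - 1)) = q + a * (u - 1) := by rw [← hqp]; ring
    have h4 : q * (1 + p * (u - 1)) ≤ q * u ^ p := mul_le_mul_of_nonneg_left hber hq.le
    have hq1 : q = 1 - b := hqdef
    nlinarith [h2, h3, h4]

theorem convexOn_rpow_mul_rpow (a b : ℝ) (hb : b ≤ 0) (hab : a ≤ 0 ∨ 1 ≤ a + b) :
    ConvexOn ℝ (Set.Ioi (0:ℝ) ×ˢ Set.Ioi (0:ℝ))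
      (fun z : ℝ × ℝ => z.1 ^ a * z.2 ^ b) := by
  refine ⟨(convex_Ioi 0).prod (convex_Ioi 0), ?_⟩
  rintro ⟨x1, x2⟩ ⟨hx1, hx2⟩ ⟨y1, y2⟩ ⟨hy1, hy2⟩ lam mu hlam hmu hsum
  simp only [Set.mem_Ioi] at hx1 hx2 hy1 hy2
  simp only [Prod.smul_mk, Prod.mk_add_mk, smul_eq_mul]
  set s1 : ℝ := lam * x1 + mu * y1 with hs1def
  set s2 : ℝ := lam * x2 + mu * y2 with hs2def
  have hpos : ∀ {l m z w : ℝ}, 0 ≤ l → 0 ≤ m → l + m = 1 → 0 < z → 0 < w →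
      0 < l * z + m * w := by
    intro l m z w hl hm hlm hz hw
    rcases hl.lt_or_eq with h | h
    · have : 0 ≤ m * w := mul_nonneg hm hw.le
      nlinarith
    · have hm1 : m = 1 := by linarith
      simp [← h, hm1, hw]
  have hs1 : 0 < s1 := hpos hlam hmu hsum hx1 hy1
  have hs2 : 0 < s2 := hpos hlam hmu hsum hx2 hy2
  set F : ℝ := s1 ^ a * s2 ^ b with hFdef
  have hF : 0 < F := mul_pos (rpow_pos_of_pos hs1 a) (rpow_pos_of_pos hs2 b)
  have key : ∀ {z w : ℝ}, 0 < z → 0 < w →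
      F * (a * (z / s1) + b * (w / s2) + (1 - a - b)) ≤ z ^ a * w ^ b := by
    intro z w hz hw
    have ht := rpow_tangent a b hb hab (div_pos hz hs1) (div_pos hw hs2)
    have hrw : (z / s1) ^ a * (w / s2) ^ b = (z ^ a * w ^ b) / F := by
      rw [Real.div_rpow hz.le hs1.le, Real.div_rpow hw.le hs2.le, hFdef]
      ring
    rw [hrw] at ht
    calc F * (a * (z / s1) + b * (w / s2) + (1 - a - b))
        ≤ F * ((z ^ a * w ^ b) / F) := mul_le_mul_of_nonneg_left ht hF.le
      _ = z ^ a * w ^ b := by field_simp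
  have hx := key hx1 hx2
  have hy := key hy1 hy2
  calc s1 ^ a * s2 ^ b
      = F := rfl
    _ = lam * (F * (a * (x1 / s1) + b * (x2 / s2) + (1 - a - b)))
        + mu * (F * (a * (y1 / s1) + b * (y2 / s2) + (1 - a - b))) := by
        have e1 : s1 / s1 = 1 := div_self hs1.ne'
        have e2 : s2 / s2 = 1 := div_self hs2.ne'
        have : lam * (a * (x1 / s1) + b * (x2 / s2) + (1 - a - b))
            + mu * (a * (y1 / s1) + b * (y2 / s2) + (1 - a - b))
            = a * (s1 / s1) + b * (s2 / s2) + (lam + mu) * (1 - a - b) := by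
          rw [hs1def, hs2def]; ring
        rw [show lam * (F * (a * (x1 / s1) + b * (x2 / s2) + (1 - a - b)))
            + mu * (F * (a * (y1 / s1) + b * (y2 / s2) + (1 - a - b)))
            = F * (lam * (a * (x1 / s1) + b * (x2 / s2) + (1 - a - b))
              + mu * (a * (y1 / s1) + b * (y2 / s2) + (1 - a - b))) by ring, this,
          e1, e2, hsum]
        ring
    _ ≤ lam * (x1 ^ a * x2 ^ b) + mu * (y1 ^ a * y2 ^ b) :=
        add_le_add (mul_le_mul_of_nonneg_left hx hlam) (mul_le_mul_of_nonneg_left hy hmu)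
end

section
/- Let m ≥ 1, λ_1,...,λ_m > 0 with ∑ λ_i = 1, let M be a positive semidefinite symmetric n×n matrix, and let X_1,...,X_m, Y be symmetric n×n matrices satisfying the block inequality diag(λ_1 X_1,...,λ_m X_m) ≤ (λ_i λ_j Y)_{i,j}. Then for any positive reals r_1,...,r_m, one has ∑_i λ_i r_i² tr(M X_i) ≤ (∑_i λ_i r_i)² tr(M Y). -/
open Finset in
theorem block_loewner_trace (m n : ℕ) (hm : 1 ≤ m) (lam : Fin m → ℝ)
    (hlam : ∀ i, 0 < lam i) (hsum : ∑ i, lam i = 1)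
    (M : Matrix (Fin n) (Fin n) ℝ) (hM : M.PosSemidef)
    (X : Fin m → Matrix (Fin n) (Fin n) ℝ) (Y : Matrix (Fin n) (Fin n) ℝ)
    (hX : ∀ i, (X i).IsHermitian) (hY : Y.IsHermitian)
    (hblock :
      (Matrix.of (fun P Q : Fin m × Fin n => lam P.1 * lam Q.1 * Y P.2 Q.2) -
       Matrix.of (fun P Q : Fin m × Fin n =>
          if P.1 = Q.1 then lam P.1 * X P.1 P.2 Q.2 else 0)).PosSemidef)
    (r : Fin m → ℝ) (hr : ∀ i, 0 < r i) :
    ∑ i, lam i * r i ^ 2 * (M * X i).trace ≤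
      (∑ i, lam i * r i) ^ 2 * (M * Y).trace := by
  classical
  -- Key pointwise inequality from the block PSD hypothesis
  have key : ∀ v : Fin n → ℝ,
      ∑ i, lam i * r i ^ 2 * (dotProduct v (Matrix.mulVec (X i) v)) ≤
        (∑ i, lam i * r i) ^ 2 * (dotProduct v (Matrix.mulVec Y v)) := by
    intro v
    have h := hblock.dotProduct_mulVec_nonneg (fun P : Fin m × Fin n => r P.1 * v P.2)
    simp only [Pi.star_apply, star_trivial, dotProduct, Matrix.mulVec, Matrix.sub_apply, Matrix.of_apply,
      Fintype.sum_prod_type, sub_mul, mul_sub, Finset.sum_sub_distrib, Finset.mul_sum,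
      ite_mul, zero_mul, mul_ite, mul_zero] at h
    have hC : (∑ x : Fin m, ∑ x1 : Fin n, ∑ x2 : Fin m, ∑ x3 : Fin n,
          r x * v x1 * (lam x * lam x2 * Y x1 x3 * (r x2 * v x3))) =
        (∑ i, lam i * r i) ^ 2 * (dotProduct v (Matrix.mulVec Y v)) := by
      have step1 : (∑ x : Fin m, ∑ x1 : Fin n, ∑ x2 : Fin m, ∑ x3 : Fin n,
            r x * v x1 * (lam x * lam x2 * Y x1 x3 * (r x2 * v x3))) =
          ∑ x : Fin m, (lam x * r x) *
            ∑ x1 : Fin n, v x1 * ((∑ x2, lam x2 * r x2) * ∑ x3, Y x1 x3 * v x3) := by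
        simp only [Finset.mul_sum, Finset.sum_mul]
        refine Finset.sum_congr rfl fun x _ => Finset.sum_congr rfl fun x1 _ =>
          Finset.sum_comm.trans ?_
        exact Finset.sum_congr rfl fun x3 _ => Finset.sum_congr rfl fun x2 _ => by ring
      rw [step1]
      have step2 : ∀ x1 : Fin n, v x1 * ((∑ x2, lam x2 * r x2) * ∑ x3, Y x1 x3 * v x3) =
          (∑ x2, lam x2 * r x2) * (v x1 * ∑ x3, Y x1 x3 * v x3) := fun x1 => by ring
      simp only [step2]
      rw [← Finset.mul_sum, ← Finset.sum_mul]
      simp only [dotProduct, Matrix.mulVec]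
      ring
    have hD : (∑ x : Fin m, ∑ x1 : Fin n, ∑ x2 : Fin m, ∑ x3 : Fin n,
          if x = x2 then r x * v x1 * (lam x * X x x1 x3 * (r x2 * v x3)) else 0) =
        ∑ i, lam i * r i ^ 2 * (dotProduct v (Matrix.mulVec (X i) v)) := by
      simp only [Finset.sum_ite_irrel, Finset.sum_const_zero, Finset.sum_ite_eq,
        Finset.sum_ite_eq', Finset.mem_univ, if_true, dotProduct, Matrix.mulVec,
        Finset.mul_sum]
      exact Finset.sum_congr rfl fun x _ => Finset.sum_congr rfl fun x1 _ =>
        Finset.sum_congr rfl fun x3 _ => by ring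
    rw [hC, hD] at h
    linarith
  -- Trace via columns of the square root of M
  set A := (open scoped MatrixOrder in CFC.sqrt M) with hAdef
  have hAH : A.IsHermitian := by
    open scoped MatrixOrder in exact (Matrix.nonneg_iff_posSemidef.mp (CFC.sqrt_nonneg M)).1
  have hAA : A * A = M := by
    open scoped MatrixOrder in exact CFC.sqrt_mul_sqrt_self M hM.nonneg
  have hs : ∀ i j, A i j = A j i := fun i j => by simpa using (hAH.apply i j).symm
  have htr : ∀ Z : Matrix (Fin n) (Fin n) ℝ,
      (M * Z).trace = ∑ k, dotProduct (fun p => A p k) (Matrix.mulVec Z (fun p => A p k)) := by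
    intro Z
    rw [← hAA, mul_assoc, Matrix.trace_mul_comm]
    simp only [Matrix.trace, Matrix.diag, Matrix.mul_apply, dotProduct, Matrix.mulVec,
      Finset.sum_mul, Finset.mul_sum]
    refine Finset.sum_congr rfl fun k _ => ?_
    rw [Finset.sum_comm]
    exact Finset.sum_congr rfl fun p _ => Finset.sum_congr rfl fun q _ => by rw [hs k p]; ring
  calc ∑ i, lam i * r i ^ 2 * (M * X i).trace
      = ∑ k, ∑ i, lam i * r i ^ 2 * (dotProduct (fun p => A p k) (Matrix.mulVec (X i) (fun p => A p k))) := by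
        simp only [htr, Finset.mul_sum]
        exact Finset.sum_comm
    _ ≤ ∑ k, (∑ i, lam i * r i) ^ 2 * (dotProduct (fun p => A p k) (Matrix.mulVec Y (fun p => A p k))) :=
        Finset.sum_le_sum fun k _ => key _
    _ = (∑ i, lam i * r i) ^ 2 * (M * Y).trace := by
        rw [htr, Finset.mul_sum]
end

section
/- Let H : (0,∞) × Sⁿ → ℝ be defined by H(r,X) = −(1/p) r² tr(X) with p ∈ (0,1). If λ ∈ Λ_m, r_1,...,r_m > 0, and X_1,...,X_m, Y ∈ Sⁿ satisfy diag(λ_1 X_1,...,λ_m X_m) ≤ (λ_i λ_j Y)_{i,j} in the Loewner order on mn×mn symmetric matrices, then ∑_i λ_i H(r_i, X_i) ≥ H(∑_i λ_i r_i, Y). -/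
open Finset in
theorem key_structural_inequality_laplacian (m n : ℕ) (p : ℝ)
    (hp : p ∈ Set.Ioo (0:ℝ) 1) (lam : Fin m → ℝ)
    (hlam : ∀ i, lam i ∈ Set.Ioo (0:ℝ) 1) (hsum : ∑ i, lam i = 1)
    (r : Fin m → ℝ) (hr : ∀ i, 0 < r i)
    (X : Fin m → Matrix (Fin n) (Fin n) ℝ) (Y : Matrix (Fin n) (Fin n) ℝ)
    (hX : ∀ i, (X i).IsHermitian) (hY : Y.IsHermitian)
    (hblock :
      (Matrix.of (fun P Q : Fin m × Fin n => lam P.1 * lam Q.1 * Y P.2 Q.2) -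
       Matrix.of (fun P Q : Fin m × Fin n =>
          if P.1 = Q.1 then lam P.1 * X P.1 P.2 Q.2 else 0)).PosSemidef) :
    -(1/p) * (∑ i, lam i * r i) ^ 2 * Y.trace ≤
      ∑ i, lam i * (-(1/p) * r i ^ 2 * (X i).trace) := by
  have key : ∀ k : Fin n,
      ∑ i, lam i * r i ^ 2 * X i k k ≤ (∑ i, lam i * r i)^2 * Y k k := by
    intro k
    have h := hblock.dotProduct_mulVec_nonneg (fun P : Fin m × Fin n => r P.1 * (if P.2 = k then 1 else 0))
    simp only [dotProduct, Matrix.mulVec, Pi.star_apply, star_trivial,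
      Matrix.sub_apply, Matrix.of_apply, Fintype.sum_prod_type, dotProduct,
      mul_ite, ite_mul, mul_one, mul_zero, zero_mul, one_mul, sub_mul, mul_sub,
      Finset.sum_ite_eq, Finset.sum_ite_eq', Finset.mem_univ, if_true,
      Finset.sum_sub_distrib] at h
    have e1 : (∑ i, lam i * r i)^2 * Y k k
        = ∑ x, r x * ∑ y, lam x * lam y * Y k k * r y := by
      rw [sq, Finset.sum_mul_sum, Finset.sum_mul]
      refine Finset.sum_congr rfl fun x _ => ?_
      rw [Finset.mul_sum, Finset.sum_mul]
      exact Finset.sum_congr rfl fun y _ => by ring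
    have e2 : ∑ x, r x * (lam x * X x k k * r x) = ∑ i, lam i * r i ^ 2 * X i k k :=
      Finset.sum_congr rfl fun i _ => by ring
    linarith [h, e1 ▸ (le_refl ((∑ i, lam i * r i)^2 * Y k k))]
  have h2 : ∑ i, lam i * r i ^ 2 * (X i).trace ≤ (∑ i, lam i * r i)^2 * Y.trace := by
    have hrX : ∑ i, lam i * r i ^ 2 * (X i).trace
        = ∑ k, ∑ i, lam i * r i ^ 2 * X i k k := by
      rw [Finset.sum_comm]
      refine Finset.sum_congr rfl fun i _ => ?_
      simp [Matrix.trace, Matrix.diag, Finset.mul_sum]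
    have hrY : (∑ i, lam i * r i)^2 * Y.trace
        = ∑ k, (∑ i, lam i * r i)^2 * Y k k := by
      simp [Matrix.trace, Matrix.diag, Finset.mul_sum]
    rw [hrX, hrY]
    exact Finset.sum_le_sum fun k _ => key k
  have hrw : ∑ i, lam i * (-(1/p) * r i ^ 2 * (X i).trace)
      = -(1/p) * ∑ i, lam i * r i ^ 2 * (X i).trace := by
    rw [Finset.mul_sum]
    exact Finset.sum_congr rfl fun i _ => by ring
  have hp' : (0:ℝ) ≤ 1/p := le_of_lt (one_div_pos.mpr hp.1)
  rw [hrw]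
  nlinarith [mul_le_mul_of_nonneg_left h2 hp']
end
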